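/- arXiv:1111.0871 — 2 statements merged into one kernel-verified Lean document; each statement's English description precedes it below -/
import Mathlib

section
/- Let q : T̃ → T be a locally surjective morphism of trees, let E be an end of T with q^{-1}(E) a singleton, let τ be a geodesic ray in T representing E, and let r ∈ ℝ. Then the preimage q^{-1}(HB_r(τ)) of the horoball HB_r(τ) about E is a connected subtree of T̃. -/
/-- A geodesic ray in a tree: an injective sequence of consecutively adjacent
vertices. -/
def IsGeodRay {V : Type*} (T : SimpleGraph V) (τ : ℕ → V) : Prop :=
  (∀ n, T.Adj (τ n) (τ (n + 1))) ∧ Function.Injective τ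

/-- Two geodesic rays represent the same end iff they eventually coincide. -/
def RayEquiv {V : Type*} (τ σ : ℕ → V) : Prop :=
  ∃ k l : ℕ, ∀ n : ℕ, τ (k + n) = σ (l + n)

/-- `σ` is a lift under `q` of a geodesic ray of `T` representing the same end
as `τ`. -/
def IsLiftOfEnd {W V : Type*} (S : SimpleGraph W) (T : SimpleGraph V)
    (q : W → V) (τ : ℕ → V) (σ : ℕ → W) : Prop :=
  IsGeodRay S σ ∧ IsGeodRay T (fun n => q (σ n)) ∧ RayEquiv (fun n => q (σ n)) τ

/-- `p` lies in the horoball `HB_r(τ)`: the Busemann function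
`β_τ(p) = lim_n (n - d(τ(n), p))` (limit of a nondecreasing sequence) is at
least `r`. -/
def InHoroball {V : Type*} (T : SimpleGraph V) (τ : ℕ → V) (r : ℝ) (p : V) : Prop :=
  ∃ n : ℕ, r ≤ (n : ℝ) - (T.dist (τ n) p : ℝ)

open SimpleGraph

section Aux
variable {V : Type*} {G : SimpleGraph V}

/-- The walk along a sequence of consecutively adjacent vertices. -/
def seqWalk (G : SimpleGraph V) (f : ℕ → V) (h : ∀ n, G.Adj (f n) (f (n + 1))) :
    (n : ℕ) → G.Walk (f 0) (f n)
  | 0 => SimpleGraph.Walk.nil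
  | n + 1 => (seqWalk G f h n).concat (h n)

lemma seqWalk_length (f : ℕ → V) (h : ∀ n, G.Adj (f n) (f (n + 1))) (n : ℕ) :
    (seqWalk G f h n).length = n := by
  induction n with
  | zero => rfl
  | succ n ih => simp [seqWalk, Walk.length_concat, ih]

lemma seqWalk_support (f : ℕ → V) (h : ∀ n, G.Adj (f n) (f (n + 1))) (n : ℕ) :
    (seqWalk G f h n).support = (List.range (n + 1)).map f := by
  induction n with
  | zero => rfl
  | succ n ih =>
      rw [show n + 1 + 1 = (n+1) + 1 from rfl, List.range_succ, List.map_append]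
      simp [seqWalk, Walk.support_concat, ih]

lemma path_length_eq_dist (hG : G.IsTree) {a b : V} (p : G.Walk a b) (hp : p.IsPath) :
    p.length = G.dist a b := by
  obtain ⟨p₀, hp₀, hl⟩ := hG.isConnected.exists_path_of_dist a b
  rw [(hG.existsUnique_path a b).unique hp hp₀, hl]

lemma dist_seq (hG : G.IsTree) {f : ℕ → V} (h : ∀ n, G.Adj (f n) (f (n + 1)))
    (hinj : Function.Injective f) (n : ℕ) : G.dist (f 0) (f n) = n := by
  rw [← path_length_eq_dist hG (seqWalk G f h n), seqWalk_length]
  rw [Walk.isPath_def, seqWalk_support]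
  exact List.nodup_range.map hinj

lemma dist_start_getVert_le (hc : G.Connected) {a b : V} (p : G.Walk a b) (i : ℕ) :
    G.dist a (p.getVert i) ≤ i := by
  induction p generalizing i with
  | nil => simp [Walk.getVert, SimpleGraph.dist_self]
  | @cons u u' b hadj q ih =>
      cases i with
      | zero => simp [Walk.getVert, SimpleGraph.dist_self]
      | succ i =>
          rw [Walk.getVert_cons_succ]
          calc G.dist u (q.getVert i) ≤ G.dist u u' + G.dist u' (q.getVert i) :=
                hc.dist_triangle
            _ ≤ 1 + i := by
                have h1 : G.dist u u' ≤ 1 := by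
                  simpa using SimpleGraph.dist_le (Walk.cons hadj Walk.nil)
                exact Nat.add_le_add h1 (ih i)
            _ = i + 1 := by omega

lemma dist_getVert_end_le {a b : V} (p : G.Walk a b) (i : ℕ) :
    G.dist (p.getVert i) b ≤ p.length - i := by
  induction p generalizing i with
  | nil => simp [Walk.getVert]
  | @cons u u' b hadj q ih =>
      cases i with
      | zero =>
          simpa [Walk.getVert] using SimpleGraph.dist_le (Walk.cons hadj q)
      | succ i =>
          rw [Walk.getVert_cons_succ]
          simpa using ih i

lemma between_mem_walk (hG : G.IsTree) {a b x : V} (p : G.Walk a b)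
    (hx : G.dist a x + G.dist x b = G.dist a b) : x ∈ p.support := by
  classical
  obtain ⟨p₁, _, h₁⟩ := hG.isConnected.exists_path_of_dist a x
  obtain ⟨p₂, _, h₂⟩ := hG.isConnected.exists_path_of_dist x b
  have hg : (p₁.append p₂).length = G.dist a b := by
    rw [Walk.length_append]; omega
  have hpath := (p₁.append p₂).isPath_of_length_eq_dist hg
  have heq := (hG.existsUnique_path a b).unique p.bypass_isPath hpath
  refine p.support_bypass_subset ?_
  rw [heq, Walk.mem_support_append_iff]
  exact Or.inl p₁.end_mem_support

end Aux

open SimpleGraph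




noncomputable def liftF {W V : Type*} (S : SimpleGraph W) {T : SimpleGraph V} (q : W → V)
    (hlocsurj : ∀ (w : W) (v' : V), T.Adj (q w) v' → ∃ w' : W, S.Adj w w' ∧ q w' = v')
    (ρ : ℕ → V) (hadj : ∀ n, T.Adj (ρ n) (ρ (n + 1))) (w : W) (hw : q w = ρ 0) :
    (n : ℕ) → {x : W // q x = ρ n}
  | 0 => ⟨w, hw⟩
  | n + 1 =>
      ⟨(hlocsurj (liftF S q hlocsurj ρ hadj w hw n).1 (ρ (n + 1))
          (by rw [(liftF S q hlocsurj ρ hadj w hw n).2]; exact hadj n)).choose,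
       (hlocsurj (liftF S q hlocsurj ρ hadj w hw n).1 (ρ (n + 1))
          (by rw [(liftF S q hlocsurj ρ hadj w hw n).2]; exact hadj n)).choose_spec.2⟩

lemma exists_lift {W V : Type*} (S : SimpleGraph W) {T : SimpleGraph V} (q : W → V)
    (hlocsurj : ∀ (w : W) (v' : V), T.Adj (q w) v' → ∃ w' : W, S.Adj w w' ∧ q w' = v')
    (ρ : ℕ → V) (hadj : ∀ n, T.Adj (ρ n) (ρ (n + 1))) (w : W) (hw : q w = ρ 0) :
    ∃ σ : ℕ → W, σ 0 = w ∧ (∀ n, q (σ n) = ρ n) ∧ ∀ n, S.Adj (σ n) (σ (n + 1)) := by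
  refine ⟨fun n => (liftF S q hlocsurj ρ hadj w hw n).1, rfl,
    fun n => (liftF S q hlocsurj ρ hadj w hw n).2, fun n => ?_⟩
  exact (hlocsurj (liftF S q hlocsurj ρ hadj w hw n).1 (ρ (n + 1))
          (by rw [(liftF S q hlocsurj ρ hadj w hw n).2]; exact hadj n)).choose_spec.1

lemma exists_ray {V : Type*} {T : SimpleGraph V} (hT : T.IsTree) (τ : ℕ → V)
    (hτ : IsGeodRay T τ) (r : ℝ) (v : V) (hv : InHoroball T τ r v) :
    ∃ ρ : ℕ → V, ρ 0 = v ∧ (∀ n, T.Adj (ρ n) (ρ (n + 1))) ∧ Function.Injective ρ ∧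
      (∀ i, InHoroball T τ r (ρ i)) ∧ RayEquiv ρ τ := by
  classical
  set c : ℕ → ℕ := fun n => T.dist (τ n) v with hc
  have hadj1 : ∀ n, T.dist (τ n) (τ (n + 1)) ≤ 1 := fun n => by
    simpa using SimpleGraph.dist_le (Walk.cons (hτ.1 n) Walk.nil)
  have hstep : ∀ n, c (n + 1) ≤ c n + 1 := by
    intro n
    have h3 := hT.isConnected.dist_triangle (u := τ (n + 1)) (v := τ n) (w := v)
    have h4 : T.dist (τ (n + 1)) (τ n) = T.dist (τ n) (τ (n + 1)) := SimpleGraph.dist_comm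
    have := hadj1 n
    simp only [hc]
    omega
  -- distance along the ray
  have hdistτ : ∀ N m : ℕ, T.dist (τ N) (τ (N + m)) = m := by
    intro N m
    have hinj : Function.Injective (fun k => τ (N + k)) := by
      intro a b hab
      have := hτ.2 hab
      omega
    have := dist_seq hT (f := fun k => τ (N + k)) (fun k => hτ.1 (N + k)) hinj m
    simpa using this
  set a : ℕ → ℤ := fun n => (n : ℤ) - c n with ha
  have hamono : Monotone a := by
    apply monotone_nat_of_le_succ
    intro n
    have := hstep n
    simp only [ha]
    push_cast
    omega
  have hbound : ∀ n, a n ≤ c 0 := by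
    intro n
    have h1 : T.dist (τ 0) (τ n) = n := by simpa using hdistτ 0 n
    have h3 := hT.isConnected.dist_triangle (u := τ 0) (v := v) (w := τ n)
    rw [h1] at h3
    have h4 : T.dist v (τ n) = T.dist (τ n) v := SimpleGraph.dist_comm
    simp only [ha, hc]
    omega
  set b : ℕ → ℕ := fun n => ((c 0 : ℤ) - a n).toNat with hb
  obtain ⟨N, hN⟩ : sInf (Set.range b) ∈ Set.range b := Nat.sInf_mem ⟨b 0, 0, rfl⟩
  have hstab : ∀ m, N ≤ m → a m = a N := by
    intro m hm
    have h1 : b N ≤ b m := hN ▸ Nat.sInf_le ⟨m, rfl⟩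
    have h2 : a N ≤ a m := hamono hm
    have e1 := hbound m
    have e2 := hbound N
    simp only [hb] at h1
    omega
  set L : ℕ := c N with hL
  have hgrow : ∀ m, c (N + m) = L + m := by
    intro m
    have := hstab (N + m) (Nat.le_add_right _ _)
    simp only [ha] at this
    push_cast at this
    omega
  have hrN : r ≤ (N : ℝ) - (L : ℝ) := by
    obtain ⟨n₀, hn₀⟩ := hv
    have h1 : a n₀ ≤ a N :=
      le_trans (hamono (Nat.le_add_right n₀ N)) (le_of_eq (hstab (n₀ + N) (Nat.le_add_left _ _)))
    have h2 : (a n₀ : ℝ) ≤ (a N : ℝ) := by exact_mod_cast h1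
    have h3 : (a n₀ : ℝ) = (n₀ : ℝ) - (c n₀ : ℝ) := by simp [ha]
    have h4 : (a N : ℝ) = (N : ℝ) - (L : ℝ) := by simp [ha, hL]
    calc r ≤ (n₀ : ℝ) - (c n₀ : ℝ) := hn₀
      _ = (a n₀ : ℝ) := h3.symm
      _ ≤ (a N : ℝ) := h2
      _ = (N : ℝ) - (L : ℝ) := h4
  obtain ⟨p, hplen⟩ := hT.isConnected.exists_walk_length_eq_dist v (τ N)
  have hpl : p.length = L := by
    rw [hplen, SimpleGraph.dist_comm]
  set ρ : ℕ → V := fun i => if i ≤ L then p.getVert i else τ (N + (i - L)) with hρ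
  have hρle : ∀ i, i ≤ L → ρ i = p.getVert i := fun i hi => by simp [hρ, hi]
  have hρτ : ∀ i, L ≤ i → ρ i = τ (N + (i - L)) := by
    intro i hi
    rcases eq_or_lt_of_le hi with h | h
    · rw [hρle i h.symm.le, ← h, ← hpl, p.getVert_length]
      simp [← h]
    · simp [hρ, Nat.not_le.mpr h]
  -- upper bound on distances from ρ i to the ray
  have hub : ∀ i m : ℕ, i ≤ L + m → T.dist (ρ i) (τ (N + m)) ≤ L + m - i := by
    intro i m him
    by_cases hi : i ≤ L
    · rw [hρle i hi]
      have h1 : T.dist (p.getVert i) (τ N) ≤ L - i := by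
        have := dist_getVert_end_le p i
        rwa [hpl] at this
      have h2 := hdistτ N m
      have h3 := hT.isConnected.dist_triangle (u := p.getVert i) (v := τ N) (w := τ (N + m))
      omega
    · push_neg at hi
      rw [hρτ i hi.le]
      have h5 : N + (i - L) + (m - (i - L)) = N + m := by omega
      have := hdistτ (N + (i - L)) (m - (i - L))
      rw [h5] at this
      omega
  have hρ0 : ρ 0 = v := by
    rw [hρle 0 (Nat.zero_le _), p.getVert_zero]
  -- distances from v
  have hdv : ∀ i, T.dist v (ρ i) = i := by
    intro i
    have hup : T.dist v (ρ i) ≤ i := by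
      by_cases hi : i ≤ L
      · rw [hρle i hi]
        exact dist_start_getVert_le hT.isConnected p i
      · push_neg at hi
        rw [hρτ i hi.le]
        have h1 : T.dist v (τ N) = L := by rw [← hplen, hpl]
        have h2 := hdistτ N (i - L)
        have h3 := hT.isConnected.dist_triangle (u := v) (v := τ N) (w := τ (N + (i - L)))
        omega
    have hlow : i ≤ T.dist v (ρ i) := by
      have h1 : T.dist v (τ (N + i)) = L + i := by
        have := hgrow i
        rw [SimpleGraph.dist_comm]
        exact this
      have h2 : T.dist (ρ i) (τ (N + i)) ≤ L + i - i := hub i i (by omega)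
      have h3 := hT.isConnected.dist_triangle (u := v) (v := ρ i) (w := τ (N + i))
      omega
    omega
  have hinj : Function.Injective ρ := by
    intro i j hij
    have h1 := hdv i
    have h2 := hdv j
    rw [hij] at h1
    omega
  have hadjρ : ∀ n, T.Adj (ρ n) (ρ (n + 1)) := by
    intro n
    by_cases hn : n + 1 ≤ L
    · rw [hρle n (by omega), hρle (n + 1) hn]
      exact p.adj_getVert_succ (by omega)
    · push_neg at hn
      have hnL : L ≤ n := by omega
      rw [hρτ n hnL, hρτ (n + 1) (by omega)]
      have h1 : n + 1 - L = (n - L) + 1 := by omega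
      rw [h1, ← Nat.add_assoc]
      exact hτ.1 (N + (n - L))
  have hhoro : ∀ i, InHoroball T τ r (ρ i) := by
    intro i
    refine ⟨N + i, ?_⟩
    have h1 : T.dist (ρ i) (τ (N + i)) ≤ L := by
      have := hub i i (by omega)
      omega
    have h2 : T.dist (τ (N + i)) (ρ i) ≤ L := by rwa [SimpleGraph.dist_comm]
    have h3 : (T.dist (τ (N + i)) (ρ i) : ℝ) ≤ (L : ℝ) := by exact_mod_cast h2
    have h4 : ((N + i : ℕ) : ℝ) = (N : ℝ) + (i : ℝ) := by push_cast; ring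
    rw [h4]
    have h5 : (0 : ℝ) ≤ (i : ℝ) := Nat.cast_nonneg i
    linarith
  have hequiv : RayEquiv ρ τ := by
    refine ⟨L, N, fun n => ?_⟩
    rw [hρτ (L + n) (Nat.le_add_right _ _)]
    congr 1
    omega
  exact ⟨ρ, hρ0, hadjρ, hinj, hhoro, hequiv⟩


open SimpleGraph in
/-- Let `q : T̃ → T` be a locally surjective morphism of trees,
`E` an end of `T` (represented by the geodesic ray `τ`) with `q⁻¹(E)` a
singleton, and `r ∈ ℝ`.  Then the preimage `q⁻¹(HB_r(τ))` is a connected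
subtree of `T̃`, i.e. a convex set of vertices. -/
theorem stmt12 {W V : Type*} (S : SimpleGraph W) (T : SimpleGraph V)
    (hS : S.IsTree) (hT : T.IsTree) (hlf : T.LocallyFinite)
    (q : W → V) (hq : ∀ a b : W, S.Adj a b → T.Adj (q a) (q b))
    (hlocsurj : ∀ (w : W) (v' : V), T.Adj (q w) v' → ∃ w' : W, S.Adj w w' ∧ q w' = v')
    (τ : ℕ → V) (hτ : IsGeodRay T τ)
    (hsingleton : (∃ σ : ℕ → W, IsLiftOfEnd S T q τ σ) ∧
      ∀ σ₁ σ₂ : ℕ → W, IsLiftOfEnd S T q τ σ₁ → IsLiftOfEnd S T q τ σ₂ →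
        RayEquiv σ₁ σ₂)
    (r : ℝ) :
    ∀ w₁ w₂ x : W, InHoroball T τ r (q w₁) → InHoroball T τ r (q w₂) →
      S.dist w₁ x + S.dist x w₂ = S.dist w₁ w₂ →
      InHoroball T τ r (q x) := by
  intro w₁ w₂ x h₁ h₂ hdist
  classical
  obtain ⟨ρ₁, hρ₁0, hρ₁adj, hρ₁inj, hρ₁horo, hρ₁eq⟩ := exists_ray hT τ hτ r (q w₁) h₁
  obtain ⟨ρ₂, hρ₂0, hρ₂adj, hρ₂inj, hρ₂horo, hρ₂eq⟩ := exists_ray hT τ hτ r (q w₂) h₂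
  obtain ⟨σ₁, hσ₁0, hqσ₁, hσ₁adj⟩ := exists_lift S q hlocsurj ρ₁ hρ₁adj w₁ hρ₁0.symm
  obtain ⟨σ₂, hσ₂0, hqσ₂, hσ₂adj⟩ := exists_lift S q hlocsurj ρ₂ hρ₂adj w₂ hρ₂0.symm
  have hfun₁ : (fun n => q (σ₁ n)) = ρ₁ := funext hqσ₁
  have hfun₂ : (fun n => q (σ₂ n)) = ρ₂ := funext hqσ₂
  have hlift₁ : IsLiftOfEnd S T q τ σ₁ := by
    refine ⟨⟨hσ₁adj, ?_⟩, ?_, ?_⟩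
    · intro a b hab
      exact hρ₁inj (by rw [← hqσ₁ a, ← hqσ₁ b, hab])
    · rw [hfun₁]; exact ⟨hρ₁adj, hρ₁inj⟩
    · rw [hfun₁]; exact hρ₁eq
  have hlift₂ : IsLiftOfEnd S T q τ σ₂ := by
    refine ⟨⟨hσ₂adj, ?_⟩, ?_, ?_⟩
    · intro a b hab
      exact hρ₂inj (by rw [← hqσ₂ a, ← hqσ₂ b, hab])
    · rw [hfun₂]; exact ⟨hρ₂adj, hρ₂inj⟩
    · rw [hfun₂]; exact hρ₂eq
  obtain ⟨k, l, hkl⟩ := hsingleton.2 σ₁ σ₂ hlift₁ hlift₂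
  have hz : σ₁ k = σ₂ l := by simpa using hkl 0
  have hmem := between_mem_walk hS
    (((seqWalk S σ₁ hσ₁adj k).copy hσ₁0 hz).append
      ((seqWalk S σ₂ hσ₂adj l).copy hσ₂0 rfl).reverse) hdist
  rw [Walk.mem_support_append_iff] at hmem
  rcases hmem with hm | hm
  · rw [Walk.support_copy, seqWalk_support] at hm
    obtain ⟨i, hi, hix⟩ := List.mem_map.mp hm
    rw [← hix, hqσ₁ i]
    exact hρ₁horo i
  · rw [Walk.support_reverse, List.mem_reverse, Walk.support_copy, seqWalk_support] at hm
    obtain ⟨i, hi, hix⟩ := List.mem_map.mp hm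
    rw [← hix, hqσ₂ i]
    exact hρ₂horo i
end

section
/- Let G act cocompactly on a locally finite tree T, let E be an end of T faced by some collapsing pair under a locally surjective G-morphism q : T̃ → T from a minimal G-tree T̃, and let τ be a geodesic ray representing E. Then for every λ > 0 there exist two points ỹ₁, ỹ₂ ∈ q^{-1}(HB_0(τ)) lying in different connected components of q^{-1}(HB_{-λ}(τ)). -/
/-- A `G`-tree is minimal if it has no proper nonempty `G`-invariant subtree. -/
def IsMinimalGTree {V : Type*} (T : SimpleGraph V) (G : Type*) [Group G]
    [MulAction G V] : Prop :=
  ∀ A : Set V, A.Nonempty →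
    (∀ a b c : V, a ∈ A → c ∈ A → T.dist a b + T.dist b c = T.dist a c → b ∈ A) →
    (∀ (g : G) (x : V), x ∈ A → g • x ∈ A) →
    A = Set.univ

/-- A collapsing pair under `q` faces the end represented by `τ`. -/
def CollapsingPairFacesRay {W V : Type*} (S : SimpleGraph W) (T : SimpleGraph V)
    (q : W → V) (τ : ℕ → V) : Prop :=
  ∃ p w₁ w₂ : W, S.Adj p w₁ ∧ S.Adj p w₂ ∧ w₁ ≠ w₂ ∧ q w₁ = q w₂ ∧
    ∃ N : ℕ, ∀ n ≥ N, T.dist (q p) (τ n) = T.dist (q w₁) (τ n) + 1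

namespace Stmt19Aux

open SimpleGraph

variable {V W : Type*} {T : SimpleGraph V} {S : SimpleGraph W}

/-- In a tree, every path realizes the distance. -/
lemma path_length_eq_dist (hT : T.IsTree) {x y : V} (p : T.Walk x y) (hp : p.IsPath) :
    p.length = T.dist x y := by
  obtain ⟨pg, hpg, hlen⟩ := hT.isConnected.exists_path_of_dist x y
  obtain ⟨pu, hu⟩ := hT.existsUnique_path x y
  rw [hu.2 p hp, ← hu.2 pg hpg, hlen]

/-- Any vertex on a walk splits the distance subadditively. -/
lemma dist_add_dist_le_length {x y z : V} (p : T.Walk x y) (hz : z ∈ p.support) :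
    T.dist x z + T.dist z y ≤ p.length := by
  classical
  calc T.dist x z + T.dist z y ≤ (p.takeUntil z hz).length + (p.dropUntil z hz).length :=
        Nat.add_le_add (SimpleGraph.dist_le _) (SimpleGraph.dist_le _)
    _ = p.length := by rw [← Walk.length_append, p.take_spec hz]

/-- Adjacent vertices have distances to `x` differing by exactly one (tree). -/
lemma adj_dist_cases (hT : T.IsTree) {a b : V} (hab : T.Adj a b) (x : V) :
    T.dist x b = T.dist x a + 1 ∨ T.dist x a = T.dist x b + 1 := by
  obtain ⟨p, hp, hlen⟩ := hT.isConnected.exists_path_of_dist x a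
  by_cases hb : b ∈ p.support
  · right
    have h1 : T.dist x b + T.dist b a ≤ p.length := dist_add_dist_le_length p hb
    have h2 : T.dist b a = 1 := by rw [dist_eq_one_iff_adj]; exact hab.symm
    have h3 : T.dist x a ≤ T.dist x b + T.dist b a := hT.isConnected.dist_triangle
    omega
  · left
    have hpc : (p.concat hab).IsPath := by
      rw [Walk.isPath_def, Walk.support_concat]
      simp only [List.concat_eq_append, List.nodup_append, List.nodup_cons, List.nodup_nil,
        List.mem_singleton, and_true, List.disjoint_singleton]
      refine ⟨hp.support_nodup, ?_⟩
      exact ⟨by simp, fun a ha b' hb' hab' => by subst hb'; subst hab'; exact hb ha⟩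
    have := path_length_eq_dist hT (p.concat hab) hpc
    rw [Walk.length_concat, hlen] at this
    omega

/-- once the distance to the ray increases, it keeps increasing -/
lemma persist (hT : T.IsTree) {τ : ℕ → V}
    (hτ : (∀ n, T.Adj (τ n) (τ (n + 1))) ∧ Function.Injective τ) (x : V) (j : ℕ)
    (h : T.dist x (τ (j + 1)) = T.dist x (τ j) + 1) :
    T.dist x (τ (j + 2)) = T.dist x (τ (j + 1)) + 1 := by
  have h12 : j + 1 + 1 = j + 2 := rfl
  rcases adj_dist_cases hT (hτ.1 (j+1)) x with hgood | hbad
  · rwa [h12] at hgood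
  · rw [h12] at hbad
    exfalso
    have hd2 : T.dist x (τ (j+2)) = T.dist x (τ j) := by omega
    obtain ⟨p0, hp0, hl0⟩ := hT.isConnected.exists_path_of_dist x (τ j)
    obtain ⟨p2, hp2, hl2⟩ := hT.isConnected.exists_path_of_dist x (τ (j+2))
    set q0 : T.Walk x (τ (j+1)) := p0.concat (hτ.1 j) with hq0
    set q2 : T.Walk x (τ (j+1)) := p2.concat ((hτ.1 (j+1)).symm) with hq2
    have hq0p : q0.IsPath := q0.isPath_of_length_eq_dist (by
      rw [hq0, Walk.length_concat, hl0]; omega)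
    have hq2p : q2.IsPath := q2.isPath_of_length_eq_dist (by
      rw [hq2, Walk.length_concat, hl2, hd2]; omega)
    obtain ⟨pu, hu⟩ := hT.existsUnique_path x (τ (j+1))
    have heq : q0 = q2 := by rw [hu.2 q0 hq0p, hu.2 q2 hq2p]
    have hsup : q0.support = q2.support := by rw [heq]
    rw [hq0, hq2, Walk.support_concat, Walk.support_concat] at hsup
    have hps : p0.support = p2.support := by
      have := congrArg List.dropLast hsup
      simpa [List.dropLast_concat] using this
    have hmem : τ j ∈ p2.support := hps ▸ p0.end_mem_support
    have hle := dist_add_dist_le_length p2 hmem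
    rw [hl2, hd2] at hle
    have h0 : T.dist (τ j) (τ (j+2)) = 0 := by omega
    have : τ j = τ (j+2) :=
      (hT.isConnected.dist_eq_zero_iff).mp h0
    have := hτ.2 this
    omega

lemma grad_all (hT : T.IsTree) {τ : ℕ → V}
    (hτ : (∀ n, T.Adj (τ n) (τ (n + 1))) ∧ Function.Injective τ) (x : V) (j : ℕ)
    (h : T.dist x (τ (j + 1)) = T.dist x (τ j) + 1) :
    ∀ i : ℕ, T.dist x (τ (j + i + 1)) = T.dist x (τ (j + i)) + 1 := by
  intro i
  induction i with
  | zero => exact h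
  | succ k ih =>
    have := persist hT hτ x (j + k) ih
    have e1 : j + k + 2 = j + (k+1) + 1 := by omega
    have e2 : j + k + 1 = j + (k+1) := by omega
    rwa [e1, e2] at this

lemma persist_all (hT : T.IsTree) {τ : ℕ → V}
    (hτ : (∀ n, T.Adj (τ n) (τ (n + 1))) ∧ Function.Injective τ) (x : V) (j : ℕ)
    (h : T.dist x (τ (j + 1)) = T.dist x (τ j) + 1) :
    ∀ i : ℕ, T.dist x (τ (j + i)) = T.dist x (τ j) + i := by
  intro i
  induction i with
  | zero => simp
  | succ k ih =>
    have := grad_all hT hτ x j h k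
    have e : j + k + 1 = j + (k+1) := by omega
    rw [e] at this
    omega

/-- stabilization: eventually the distance to the ray increases linearly -/
lemma exists_stab (hT : T.IsTree) {τ : ℕ → V}
    (hτ : (∀ n, T.Adj (τ n) (τ (n + 1))) ∧ Function.Injective τ) (x : V) :
    ∃ t : ℕ, ∀ i : ℕ, T.dist x (τ (t + i)) = T.dist x (τ t) + i := by
  have hup : ∃ j, T.dist x (τ (j + 1)) = T.dist x (τ j) + 1 := by
    by_contra hno
    push_neg at hno
    have hdown : ∀ j, T.dist x (τ j) = T.dist x (τ (j + 1)) + 1 := fun j =>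
      (adj_dist_cases hT (hτ.1 j) x).resolve_left (hno j)
    have hlin : ∀ j, T.dist x (τ 0) = T.dist x (τ j) + j := by
      intro j
      induction j with
      | zero => simp
      | succ k ih => rw [ih, hdown k]; ring
    have := hlin (T.dist x (τ 0) + 1)
    omega
  obtain ⟨j, hj⟩ := hup
  exact ⟨j, persist_all hT hτ x j hj⟩

/-- the ray is a geodesic -/
lemma ray_dist (hT : T.IsTree) {τ : ℕ → V}
    (hτ : (∀ n, T.Adj (τ n) (τ (n + 1))) ∧ Function.Injective τ) (a i : ℕ) :
    T.dist (τ a) (τ (a + i)) = i := by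
  have h1 : T.dist (τ a) (τ (a + 1)) = T.dist (τ a) (τ a) + 1 := by
    rw [SimpleGraph.dist_self, dist_eq_one_iff_adj]
    exact hτ.1 a
  have := persist_all hT hτ (τ a) a h1 i
  rwa [SimpleGraph.dist_self, Nat.zero_add] at this

/-- tree separation: every walk between `x` and `y` passes through any vertex
`b` between them. -/
lemma separation (hT : T.IsTree) {x y b : V}
    (hsum : T.dist x b + T.dist b y = T.dist x y) (w : T.Walk x y) :
    b ∈ w.support := by
  classical
  obtain ⟨p1, hp1, hl1⟩ := hT.isConnected.exists_path_of_dist x b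
  obtain ⟨p2, hp2, hl2⟩ := hT.isConnected.exists_path_of_dist b y
  set P : T.Walk x y := p1.append p2 with hP
  have hPlen : P.length = T.dist x y := by
    rw [hP, Walk.length_append, hl1, hl2, hsum]
  have hPpath : P.IsPath := P.isPath_of_length_eq_dist hPlen
  obtain ⟨pu, hu⟩ := hT.existsUnique_path x y
  have hbyp : w.bypass = P := by rw [hu.2 w.bypass w.bypass_isPath, hu.2 P hPpath]
  have hbP : b ∈ P.support := by
    rw [hP, Walk.mem_support_append_iff]
    exact Or.inl p1.end_mem_support
  exact w.support_bypass_subset (hbyp ▸ hbP)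

/-- distance is nonincreasing under a group element acting by graph morphism -/
lemma dist_smul_le {G : Type*} [Group G] [MulAction G V]
    (hactT : ∀ (g : G) (x y : V), T.Adj x y → T.Adj (g • x) (g • y))
    (g : G) (x y : V) : T.dist (g • x) (g • y) ≤ T.dist x y := by
  by_cases hr : T.Reachable x y
  · obtain ⟨p, hp⟩ := hr.exists_walk_length_eq_dist
    let f : T →g T := ⟨fun v => g • v, fun h => hactT g _ _ h⟩
    calc T.dist (g • x) (g • y) ≤ (p.map f).length := SimpleGraph.dist_le _
      _ = p.length := Walk.length_map _ _
      _ = T.dist x y := hp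
  · have hr2 : ¬ T.Reachable (g • x) (g • y) := by
      intro hr2
      apply hr
      obtain ⟨p⟩ := hr2
      let f : T →g T := ⟨fun v => g⁻¹ • v, fun h => hactT g⁻¹ _ _ h⟩
      exact ⟨(p.map f).copy (inv_smul_smul g x) (inv_smul_smul g y)⟩
    rw [SimpleGraph.dist_eq_zero_of_not_reachable hr,
      SimpleGraph.dist_eq_zero_of_not_reachable hr2]

lemma dist_smul {G : Type*} [Group G] [MulAction G V]
    (hactT : ∀ (g : G) (x y : V), T.Adj x y → T.Adj (g • x) (g • y))
    (g : G) (x y : V) : T.dist (g • x) (g • y) = T.dist x y := by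
  refine le_antisymm (dist_smul_le hactT g x y) ?_
  have := dist_smul_le hactT g⁻¹ (g • x) (g • y)
  simpa using this

/-- lifting a walk through a locally surjective morphism -/
lemma lift_walk (q : W → V) (hq : ∀ a b : W, S.Adj a b → T.Adj (q a) (q b))
    (hlocsurj : ∀ (w : W) (v' : V), T.Adj (q w) v' → ∃ w' : W, S.Adj w w' ∧ q w' = v') :
    ∀ {x y : V} (pw : T.Walk x y) (w : W), q w = x →
      ∃ (w' : W) (pS : S.Walk w w'), q w' = y ∧ pS.support.map q = pw.support := by
  intro x y pw
  induction pw with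
  | nil =>
    intro w hw
    exact ⟨w, SimpleGraph.Walk.nil, hw, by simp [hw]⟩
  | @cons a b c hab pw ih =>
    intro w hw
    obtain ⟨w'', hadj, hw''⟩ := hlocsurj w b (by rw [hw]; exact hab)
    obtain ⟨w', pS', hw', hsup⟩ := ih w'' hw''
    exact ⟨w', SimpleGraph.Walk.cons hadj pS', hw',
      by simp [Walk.support_cons, hsup, hw]⟩

/-- turn a finitely-indexed adjacency chain into a walk -/
lemma walk_of_chain (c : ℕ → W) :
    ∀ n : ℕ, (∀ i < n, S.Adj (c i) (c (i + 1))) →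
      ∃ w : S.Walk (c 0) (c n), ∀ z ∈ w.support, ∃ i ≤ n, c i = z := by
  intro n
  induction n with
  | zero => exact fun _ => ⟨SimpleGraph.Walk.nil, by simp⟩
  | succ k ih =>
    intro hadj
    obtain ⟨w, hw⟩ := ih (fun i hi => hadj i (Nat.lt_succ_of_lt hi))
    refine ⟨w.concat (hadj k (Nat.lt_succ_self k)), ?_⟩
    intro z hz
    rw [Walk.support_concat, List.mem_append] at hz
    rcases hz with hz | hz
    · obtain ⟨i, hi, hci⟩ := hw z hz
      exact ⟨i, Nat.le_succ_of_le hi, hci⟩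
    · simp only [List.mem_singleton] at hz
      exact ⟨k + 1, le_refl _, hz.symm⟩

/-- pigeonhole: some group element translates a directed ray edge forward -/
lemma exists_translation {G : Type*} [Group G] [MulAction G V]
    (hlf : T.LocallyFinite)
    (hactT : ∀ (g : G) (x y : V), T.Adj x y → T.Adj (g • x) (g • y))
    (hcocompact : ∃ s : Finset V, ∀ v : V, ∃ g : G, g • v ∈ s)
    {τ : ℕ → V} (hτ : (∀ n, T.Adj (τ n) (τ (n + 1))) ∧ Function.Injective τ)
    (J : ℕ) :
    ∃ (n m : ℕ) (h : G), J ≤ n ∧ n < m ∧ h • τ n = τ m ∧ h • τ (n+1) = τ (m+1) := by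
  classical
  obtain ⟨s, hs⟩ := hcocompact
  choose g hg using fun j => hs (τ j)
  set F : Finset (V × V) :=
    s.biUnion (fun x => (@SimpleGraph.neighborFinset _ T x (hlf x)).image (fun y => (x, y)))
    with hF
  have hmem : ∀ j : ℕ, (g j • τ j, g j • τ (j+1)) ∈ F := by
    intro j
    rw [hF, Finset.mem_biUnion]
    refine ⟨g j • τ j, hg j, ?_⟩
    rw [Finset.mem_image]
    refine ⟨g j • τ (j+1), ?_, rfl⟩
    rw [@SimpleGraph.mem_neighborFinset _ T _ (hlf _)]
    exact hactT (g j) _ _ (hτ.1 j)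
  have : ∃ a b : ℕ, a ≠ b ∧
      (⟨(g (J+a) • τ (J+a), g (J+a) • τ (J+a+1)), hmem (J+a)⟩ : {x // x ∈ F}) =
      ⟨(g (J+b) • τ (J+b), g (J+b) • τ (J+b+1)), hmem (J+b)⟩ :=
    Finite.exists_ne_map_eq_of_infinite _
  obtain ⟨a, b, hab, heq⟩ := this
  rw [Subtype.mk_eq_mk, Prod.mk.injEq] at heq
  rcases Nat.lt_or_ge a b with hlt | hge
  · refine ⟨J + a, J + b, (g (J+b))⁻¹ * (g (J+a)), Nat.le_add_right _ _, by omega, ?_, ?_⟩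
    · rw [mul_smul, heq.1, inv_smul_smul]
    · rw [mul_smul, heq.2, inv_smul_smul]
  · have hlt : b < a := by omega
    refine ⟨J + b, J + a, (g (J+a))⁻¹ * (g (J+b)), Nat.le_add_right _ _, by omega, ?_, ?_⟩
    · rw [mul_smul, ← heq.1, inv_smul_smul]
    · rw [mul_smul, ← heq.2, inv_smul_smul]

end Stmt19Aux

open Stmt19Aux SimpleGraph

/-- Let `G` act cocompactly on an infinite locally finite tree
`T`, let `q : T̃ → T` be a locally surjective `G`-equivariant morphism from a
minimal `G`-tree `T̃`, and let `τ` be a geodesic ray representing an end `E` of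
`T` faced by some collapsing pair.  Then for every `λ > 0` there are points
`y₁, y₂` of `q⁻¹(HB_0(τ))` lying in different connected components of
`q⁻¹(HB_{-λ}(τ))`: no combinatorial path inside `q⁻¹(HB_{-λ}(τ))` joins them. -/
theorem stmt19 {W V : Type*} (S : SimpleGraph W) (T : SimpleGraph V)
    (hS : S.IsTree) (hT : T.IsTree) (hinf : Infinite V) (hlf : T.LocallyFinite)
    (G : Type*) [Group G] [MulAction G W] [MulAction G V]
    (hactS : ∀ (g : G) (x y : W), S.Adj x y → S.Adj (g • x) (g • y))
    (hactT : ∀ (g : G) (x y : V), T.Adj x y → T.Adj (g • x) (g • y))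
    (hcocompact : ∃ s : Finset V, ∀ v : V, ∃ g : G, g • v ∈ s)
    (hmin : IsMinimalGTree S G)
    (q : W → V) (hq : ∀ a b : W, S.Adj a b → T.Adj (q a) (q b))
    (hequiv : ∀ (g : G) (w : W), q (g • w) = g • q w)
    (hlocsurj : ∀ (w : W) (v' : V), T.Adj (q w) v' → ∃ w' : W, S.Adj w w' ∧ q w' = v')
    (τ : ℕ → V) (hτ : IsGeodRay T τ)
    (hfaced : CollapsingPairFacesRay S T q τ) :
    ∀ lam : ℝ, 0 < lam →
      ∃ y₁ y₂ : W, InHoroball T τ 0 (q y₁) ∧ InHoroball T τ 0 (q y₂) ∧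
        ∀ (c : ℕ → W) (n : ℕ), c 0 = y₁ → c n = y₂ →
          (∀ i < n, S.Adj (c i) (c (i + 1))) →
          ∃ i ≤ n, ¬ InHoroball T τ (-lam) (q (c i)) := by
  classical
  intro lam hlam
  obtain ⟨p, w₁, w₂, hpw₁, hpw₂, hw12, hqw, N, hface⟩ := hfaced
  set u : V := q p with hu
  set v : V := q w₁ with hv
  obtain ⟨t, ht⟩ := exists_stab hT hτ u
  obtain ⟨n, m, h, hJn, hnm, hh1, hh2⟩ :=
    exists_translation hlf hactT hcocompact hτ (max N t)
  have hnN : N ≤ n := le_trans (le_max_left _ _) hJn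
  have hnt : t ≤ n := le_trans (le_max_right _ _) hJn
  -- the distance from u and v to the ray grows linearly beyond τ n
  have hQu : ∀ i, T.dist u (τ (n+i)) = T.dist u (τ n) + i := by
    intro i
    have h1 := ht (n - t)
    have h2 := ht (n - t + i)
    have e1 : t + (n - t) = n := by omega
    have e2 : t + (n - t + i) = n + i := by omega
    rw [e1] at h1; rw [e2] at h2
    omega
  have hQv : ∀ i, T.dist v (τ (n+i)) = T.dist v (τ n) + i := by
    intro i
    have f1 := hface n hnN
    have f2 := hface (n+i) (le_trans hnN (Nat.le_add_right _ _))
    have := hQu i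
    omega
  -- the translation step
  have hstep : ∀ x : V, (∀ i, T.dist x (τ (n+i)) = T.dist x (τ n) + i) →
      (∀ i, T.dist (h⁻¹ • x) (τ (n+i)) = T.dist (h⁻¹ • x) (τ n) + i) ∧
      T.dist (h⁻¹ • x) (τ n) = T.dist x (τ n) + (m - n) := by
    intro x hx
    have hd0 : T.dist (h⁻¹ • x) (τ n) = T.dist x (τ m) := by
      have := dist_smul hactT h (h⁻¹ • x) (τ n)
      rw [smul_inv_smul, hh1] at this
      exact this.symm
    have hdm : T.dist x (τ m) = T.dist x (τ n) + (m - n) := by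
      have := hx (m - n)
      rwa [show n + (m - n) = m by omega] at this
    have hd1 : T.dist (h⁻¹ • x) (τ (n+1)) = T.dist x (τ (m+1)) := by
      have := dist_smul hactT h (h⁻¹ • x) (τ (n+1))
      rw [smul_inv_smul, hh2] at this
      exact this.symm
    have hdm1 : T.dist x (τ (m+1)) = T.dist x (τ n) + (m + 1 - n) := by
      have := hx (m + 1 - n)
      rwa [show n + (m + 1 - n) = m + 1 by omega] at this
    have hgrad : T.dist (h⁻¹ • x) (τ (n+1)) = T.dist (h⁻¹ • x) (τ n) + 1 := by omega
    have hQ := persist_all hT hτ (h⁻¹ • x) n hgrad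
    exact ⟨hQ, by omega⟩
  -- iterate k times
  have hiter : ∀ (x : V), (∀ i, T.dist x (τ (n+i)) = T.dist x (τ n) + i) →
      ∀ j : ℕ, (∀ i, T.dist ((h⁻¹)^j • x) (τ (n+i)) = T.dist ((h⁻¹)^j • x) (τ n) + i) ∧
      T.dist ((h⁻¹)^j • x) (τ n) = T.dist x (τ n) + j * (m - n) := by
    intro x hx j
    induction j with
    | zero =>
      refine ⟨?_, ?_⟩
      · simpa using hx
      · simp
    | succ j ih =>
      have hrew : (h⁻¹)^(j+1) • x = h⁻¹ • ((h⁻¹)^j • x) := by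
        rw [pow_succ', mul_smul]
      have := hstep _ ih.1
      rw [← hrew] at this
      refine ⟨this.1, ?_⟩
      rw [this.2, ih.2]
      ring
  set k : ℕ := n + Nat.ceil lam + 1 with hk
  set uk : V := (h⁻¹)^k • u with huk
  set vk : V := (h⁻¹)^k • v with hvk
  have hitu := hiter u hQu k
  have hitv := hiter v hQv k
  rw [← huk] at hitu
  rw [← hvk] at hitv
  -- uk is very deep: every τ s is far from it
  have hdeepN : ∀ s : ℕ, Nat.ceil lam + 1 + s ≤ T.dist (τ s) uk := by
    intro s
    have hkmn : k ≤ k * (m - n) := Nat.le_mul_of_pos_right k (by omega)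
    rcases le_or_gt n s with hns | hsn
    · have h1 := hitu.1 (s - n)
      rw [show n + (s - n) = s by omega] at h1
      have h2 := hitu.2
      rw [SimpleGraph.dist_comm]
      omega
    · have htri : T.dist (τ n) uk ≤ T.dist (τ n) (τ s) + T.dist (τ s) uk :=
        hT.isConnected.dist_triangle
      have hray : T.dist (τ s) (τ n) = n - s := by
        have := ray_dist hT hτ s (n - s)
        rwa [show s + (n - s) = n by omega] at this
      rw [SimpleGraph.dist_comm (u := τ n) (v := τ s), hray] at htri
      have h2 : T.dist (τ n) uk = T.dist u (τ n) + k * (m - n) := by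
        rw [SimpleGraph.dist_comm]; exact hitu.2
      omega
  have hdeep : ∀ s : ℕ, (s : ℝ) - (T.dist (τ s) uk : ℝ) < -lam := by
    intro s
    have h1 := hdeepN s
    have h2 : lam ≤ (Nat.ceil lam : ℝ) := Nat.le_ceil lam
    have h3 : ((Nat.ceil lam + 1 + s : ℕ) : ℝ) ≤ (T.dist (τ s) uk : ℝ) := by
      exact_mod_cast h1
    push_cast at h3
    linarith
  -- facing for the translated pair
  have hfk : T.dist uk (τ n) = T.dist vk (τ n) + 1 := by
    have f1 := hface n hnN
    rw [hitu.2, hitv.2, f1]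
    ring
  -- translated collapsing pair in W
  set P : W := (h⁻¹)^k • p with hP
  set A : W := (h⁻¹)^k • w₁ with hA
  set B : W := (h⁻¹)^k • w₂ with hB
  have hqP : q P = uk := by rw [hP, hequiv, ← hu, huk]
  have hqA : q A = vk := by rw [hA, hequiv, ← hv, hvk]
  have hqB : q B = vk := by rw [hB, hequiv, ← hqw, hvk]
  have hPA : S.Adj P A := hactS _ _ _ hpw₁
  have hPB : S.Adj P B := hactS _ _ _ hpw₂
  have hAB : A ≠ B := fun e => hw12 (MulAction.injective ((h⁻¹)^k) e)
  -- geodesic from vk to τ n and its two lifts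
  obtain ⟨pth, hpth, hlen⟩ := hT.isConnected.exists_path_of_dist vk (τ n)
  obtain ⟨y₁, pS₁, hqy₁, hsup₁⟩ := lift_walk q hq hlocsurj pth A hqA
  obtain ⟨y₂, pS₂, hqy₂, hsup₂⟩ := lift_walk q hq hlocsurj pth B hqB
  have hhoro : ∀ z : W, q z = τ n → InHoroball T τ 0 (q z) := by
    intro z hz
    refine ⟨n, ?_⟩
    rw [hz, SimpleGraph.dist_self]
    simp
  -- P is not on either lift
  have hukpth : uk ∉ pth.support := by
    intro hmem
    have hle := dist_add_dist_le_length pth hmem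
    rw [hlen] at hle
    omega
  have hPnot₁ : P ∉ pS₁.support := by
    intro hmem
    apply hukpth
    rw [← hsup₁, ← hqP]
    exact List.mem_map_of_mem hmem
  have hPnot₂ : P ∉ pS₂.support := by
    intro hmem
    apply hukpth
    rw [← hsup₂, ← hqP]
    exact List.mem_map_of_mem hmem
  -- both lifts are paths
  have hnodup₁ : pS₁.support.Nodup := by
    have := hpth.support_nodup
    rw [← hsup₁] at this
    exact this.of_map
  have hnodup₂ : pS₂.support.Nodup := by
    have := hpth.support_nodup
    rw [← hsup₂] at this
    exact this.of_map
  -- dist A B = 2 and P is between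
  have hnadj : ¬ S.Adj A B := by
    intro hAdj
    have hpath1 : (SimpleGraph.Walk.cons hAdj SimpleGraph.Walk.nil).IsPath := by
      rw [Walk.isPath_def]
      simp [hAB]
    have hpath2 : (SimpleGraph.Walk.cons hPA.symm
        (SimpleGraph.Walk.cons hPB SimpleGraph.Walk.nil)).IsPath := by
      rw [Walk.isPath_def]
      simp [hPA.ne', hPB.ne, hAB]
    obtain ⟨pu, hup⟩ := hS.existsUnique_path A B
    have := (hup.2 _ hpath1).trans (hup.2 _ hpath2).symm
    have hlencontra := congrArg SimpleGraph.Walk.length this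
    simp at hlencontra
  have hdAB : S.dist A B = 2 := by
    have hle : S.dist A B ≤ 2 := by
      have := SimpleGraph.dist_le (SimpleGraph.Walk.cons hPA.symm
        (SimpleGraph.Walk.cons hPB SimpleGraph.Walk.nil))
      simpa using this
    have hne0 : S.dist A B ≠ 0 := by
      rw [Ne, hS.isConnected.dist_eq_zero_iff]
      exact hAB
    have hne1 : S.dist A B ≠ 1 := by
      rw [Ne, SimpleGraph.dist_eq_one_iff_adj]
      exact hnadj
    omega
  have hbetween : S.dist A P + S.dist P B = S.dist A B := by
    rw [hdAB]
    rw [show S.dist A P = 1 from SimpleGraph.dist_eq_one_iff_adj.mpr hPA.symm,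
      show S.dist P B = 1 from SimpleGraph.dist_eq_one_iff_adj.mpr hPB]
  -- the supports of the two lifts are disjoint
  have hdisj : ∀ z, z ∈ pS₁.support → z ∈ pS₂.support → False := by
    intro z hz1 hz2
    set Wab : S.Walk A B := (pS₁.takeUntil z hz1).append (pS₂.takeUntil z hz2).reverse
      with hWab
    have hPmem := separation hS hbetween Wab
    rw [hWab, Walk.mem_support_append_iff] at hPmem
    rcases hPmem with hm | hm
    · exact hPnot₁ (pS₁.support_takeUntil_subset hz1 hm)
    · rw [Walk.support_reverse, List.mem_reverse] at hm
      exact hPnot₂ (pS₂.support_takeUntil_subset hz2 hm)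
  -- the big path from y₁ to y₂ through P
  set FW : S.Walk y₁ y₂ := pS₁.reverse.append
    (SimpleGraph.Walk.cons hPA.symm (SimpleGraph.Walk.cons hPB pS₂)) with hFW
  have hFWsup : FW.support = pS₁.support.reverse ++ (P :: pS₂.support) := by
    rw [hFW, Walk.support_append, Walk.support_reverse]
    congr 1
  have hFWpath : FW.IsPath := by
    rw [Walk.isPath_def, hFWsup]
    rw [List.nodup_append]
    refine ⟨List.nodup_reverse.mpr hnodup₁, ?_, ?_⟩
    · exact List.nodup_cons.mpr ⟨hPnot₂, hnodup₂⟩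
    · intro a ha b hb
      rw [List.mem_reverse] at ha
      rcases List.mem_cons.mp hb with rfl | hb'
      · exact fun e => hPnot₁ (e ▸ ha)
      · exact fun e => hdisj a ha (e ▸ hb')
  have hPFW : P ∈ FW.support := by
    rw [hFWsup]
    exact List.mem_append_right _ List.mem_cons_self
  -- conclusion
  refine ⟨y₁, y₂, hhoro y₁ hqy₁, hhoro y₂ hqy₂, ?_⟩
  intro c nn hc0 hcn hadj
  obtain ⟨wlk, hwlk⟩ := walk_of_chain c nn hadj
  set wlk' : S.Walk y₁ y₂ := wlk.copy hc0 hcn with hwlk'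
  have hPw : P ∈ wlk'.support := by
    obtain ⟨pu, hup⟩ := hS.existsUnique_path y₁ y₂
    have hbyp : wlk'.bypass = FW := by
      rw [hup.2 _ wlk'.bypass_isPath, hup.2 _ hFWpath]
    exact wlk'.support_bypass_subset (hbyp ▸ hPFW)
  have hPw2 : P ∈ wlk.support := by
    rw [hwlk', Walk.support_copy] at hPw
    exact hPw
  obtain ⟨i, hi, hci⟩ := hwlk P hPw2
  refine ⟨i, hi, ?_⟩
  rintro ⟨s, hs⟩
  rw [hci, hqP] at hs
  have := hdeep s
  linarith
end
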